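/- Let k : [0, ∞) → ℝ be continuous with k(s) ≤ 0 for all s, and let F be the solution of F'' + kF = 0 with F(0) = 0, F'(0) = 1. Then for every s > 0 one has F(s) > 0 and s·F'(s) ≥ F(s) (equivalently, sF'(s)/F(s) ≥ 1). -/

import Mathlib

open Set Real Filter Topology

/-- Lemma 1 (i), first part: if `k ≤ 0` is continuous on `[0, ∞)` and `F` solves
`F'' + k F = 0`, `F(0) = 0`, `F'(0) = 1`, then for `s > 0` one has `F(s) > 0` and
`s F'(s) ≥ F(s)`. -/
theorem stmt_0 (k F F' F'' : ℝ → ℝ)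
    (hk_cont : ContinuousOn k (Set.Ici 0))
    (hk_nonpos : ∀ s ∈ Set.Ici (0 : ℝ), k s ≤ 0)
    (hF' : ∀ s ∈ Set.Ici (0 : ℝ), HasDerivWithinAt F (F' s) (Set.Ici 0) s)
    (hF'' : ∀ s ∈ Set.Ici (0 : ℝ), HasDerivWithinAt F' (F'' s) (Set.Ici 0) s)
    (hF''_cont : ContinuousOn F'' (Set.Ici 0))
    (hODE : ∀ s ∈ Set.Ici (0 : ℝ), F'' s + k s * F s = 0)
    (hF0 : F 0 = 0) (hF'0 : F' 0 = 1) :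
    ∀ s > (0 : ℝ), 0 < F s ∧ F s ≤ s * F' s := by
  have hFcont : ContinuousOn F (Set.Ici 0) := fun s hs => (hF' s hs).continuousWithinAt
  have hF'cont : ContinuousOn F' (Set.Ici 0) := fun s hs => (hF'' s hs).continuousWithinAt
  -- Key lemma: if F ≥ 0 on [0,b] then F' is monotone there, F' ≥ 1, F t ≥ t.
  have key : ∀ b : ℝ, 0 ≤ b → (∀ t ∈ Set.Icc (0:ℝ) b, 0 ≤ F t) →
      MonotoneOn F' (Set.Icc 0 b) ∧ ∀ t ∈ Set.Icc (0:ℝ) b, 1 ≤ F' t ∧ t ≤ F t := by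
    intro b hb hpos
    have hsub : Set.Icc (0:ℝ) b ⊆ Set.Ici 0 := fun t ht => ht.1
    have hmono : MonotoneOn F' (Set.Icc 0 b) := by
      apply monotoneOn_of_deriv_nonneg (convex_Icc (0:ℝ) b) (hF'cont.mono hsub)
      · intro x hx
        rw [interior_Icc] at hx
        exact (((hF'' x (Set.mem_Ici.mpr (le_of_lt hx.1))).hasDerivAt
          (Ici_mem_nhds hx.1)).differentiableAt).differentiableWithinAt
      · intro x hx
        rw [interior_Icc] at hx
        have hd : deriv F' x = F'' x :=
          ((hF'' x (Set.mem_Ici.mpr (le_of_lt hx.1))).hasDerivAt (Ici_mem_nhds hx.1)).deriv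
        rw [hd]
        have h1 := hODE x (le_of_lt hx.1)
        have h2 : 0 ≤ -k x * F x :=
          mul_nonneg (neg_nonneg.mpr (hk_nonpos x (Set.mem_Ici.mpr (le_of_lt hx.1))))
            (hpos x ⟨le_of_lt hx.1, le_of_lt hx.2⟩)
        nlinarith
    have hF'ge : ∀ t ∈ Set.Icc (0:ℝ) b, 1 ≤ F' t := by
      intro t ht
      have := hmono ⟨le_refl 0, hb⟩ ht ht.1
      rwa [hF'0] at this
    refine ⟨hmono, fun t ht => ⟨hF'ge t ht, ?_⟩⟩
    -- consider g t = F t - t, monotone on [0,b]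
    have hg : MonotoneOn (fun t => F t - t) (Set.Icc 0 b) := by
      apply monotoneOn_of_deriv_nonneg (convex_Icc (0:ℝ) b) ((hFcont.mono hsub).sub continuousOn_id)
      · intro x hx
        rw [interior_Icc] at hx
        exact ((((hF' x (Set.mem_Ici.mpr (le_of_lt hx.1))).hasDerivAt
          (Ici_mem_nhds hx.1)).differentiableAt).sub differentiable_id.differentiableAt).differentiableWithinAt
      · intro x hx
        rw [interior_Icc] at hx
        have hd : deriv (fun t => F t - t) x = F' x - 1 := by
          have := (((hF' x (Set.mem_Ici.mpr (le_of_lt hx.1))).hasDerivAt (Ici_mem_nhds hx.1)).sub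
            (hasDerivAt_id x))
          exact this.deriv
        show 0 ≤ deriv (fun t => F t - t) x
        rw [hd]
        have := hF'ge x ⟨le_of_lt hx.1, le_of_lt hx.2⟩
        linarith
    have := hg ⟨le_refl 0, hb⟩ ht ht.1
    simp only [hF0] at this
    linarith
  -- F > 0 near 0
  have hslope : Filter.Tendsto (slope F 0) (𝓝[Set.Ici 0 \ {0}] 0) (𝓝 1) := by
    have h0 : HasDerivWithinAt F 1 (Set.Ici 0) 0 := by
      have := hF' 0 Set.self_mem_Ici; rwa [hF'0] at this
    exact hasDerivWithinAt_iff_tendsto_slope.mp h0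
  have hpos_near : ∀ᶠ t in 𝓝[Set.Ici 0 \ {0}] 0, 0 < slope F 0 t :=
    hslope.eventually (eventually_gt_nhds one_pos)
  rw [eventually_nhdsWithin_iff, Metric.eventually_nhds_iff] at hpos_near
  obtain ⟨ε, hε, hball⟩ := hpos_near
  have hnear : ∀ t : ℝ, 0 < t → t < ε → 0 < F t := by
    intro t ht htε
    have hmem : t ∈ Set.Ici (0:ℝ) \ {0} := ⟨le_of_lt ht, by simp [ne_of_gt ht]⟩
    have hd : dist t 0 < ε := by
      rw [Real.dist_eq, sub_zero, abs_of_pos ht]; exact htε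
    have := hball hd hmem
    rw [slope_def_field, hF0] at this
    have h2 : 0 < (F t - 0) / (t - 0) := this
    rw [sub_zero, sub_zero] at h2
    exact (div_pos_iff.mp h2).elim (fun h => h.1)
      (fun h => absurd ht (not_lt.mpr (le_of_lt h.2)))
  -- Global nonnegativity
  have hnonneg : ∀ t : ℝ, 0 ≤ t → 0 ≤ F t := by
    by_contra h
    push_neg at h
    obtain ⟨t1, ht1, hFt1⟩ := h
    set B : Set ℝ := {t : ℝ | 0 ≤ t ∧ F t < 0} with hB
    have hBne : B.Nonempty := ⟨t1, ht1, hFt1⟩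
    have hBbdd : BddBelow B := ⟨0, fun t ht => ht.1⟩
    set t₀ := sInf B with ht₀def
    have hBlb : ∀ t ∈ B, ε ≤ t := by
      intro t ht
      by_contra hlt
      push_neg at hlt
      rcases eq_or_lt_of_le ht.1 with h0 | h0
      · have h2 := ht.2; rw [← h0, hF0] at h2; exact absurd h2 (lt_irrefl 0)
      · exact absurd ht.2 (not_lt.mpr (le_of_lt (hnear t h0 hlt)))
    have hεt₀ : ε ≤ t₀ := le_csInf hBne hBlb
    have ht₀pos : 0 < t₀ := lt_of_lt_of_le hε hεt₀
    have hlow : ∀ t, 0 ≤ t → t < t₀ → 0 ≤ F t := by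
      intro t ht htlt
      by_contra hneg
      push_neg at hneg
      exact absurd (csInf_le hBbdd ⟨ht, hneg⟩) (not_le.mpr htlt)
    have hFt₀ : 0 ≤ F t₀ := by
      have hne : (𝓝[Set.Ico 0 t₀] t₀).NeBot := by
        rw [← mem_closure_iff_nhdsWithin_neBot, closure_Ico (ne_of_lt ht₀pos)]
        exact ⟨le_of_lt ht₀pos, le_refl _⟩
      have htend : Filter.Tendsto F (𝓝[Set.Ico 0 t₀] t₀) (𝓝 (F t₀)) :=
        ((hFcont t₀ (Set.mem_Ici.mpr (le_of_lt ht₀pos))).mono (fun t ht => ht.1)).tendsto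
      exact ge_of_tendsto htend (eventually_nhdsWithin_of_forall
        (fun t ht => hlow t ht.1 ht.2))
    have hposIcc : ∀ t ∈ Set.Icc (0:ℝ) t₀, 0 ≤ F t := by
      intro t ht
      rcases lt_or_eq_of_le ht.2 with h | h
      · exact hlow t ht.1 h
      · rw [h]; exact hFt₀
    obtain ⟨_, hkey⟩ := key t₀ (le_of_lt ht₀pos) hposIcc
    have hFt₀pos : 0 < F t₀ :=
      lt_of_lt_of_le ht₀pos (hkey t₀ ⟨le_of_lt ht₀pos, le_refl _⟩).2
    -- continuity at t₀ gives a neighborhood where F > 0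
    have hc := hFcont t₀ (Set.mem_Ici.mpr (le_of_lt ht₀pos))
    rw [Metric.continuousWithinAt_iff] at hc
    obtain ⟨δ, hδ, hcb⟩ := hc (F t₀) hFt₀pos
    have hnewlb : ∀ t ∈ B, t₀ + δ ≤ t := by
      intro t ht
      by_contra hlt
      push_neg at hlt
      have htge : t₀ ≤ t := csInf_le hBbdd ht
      have hdist : dist t t₀ < δ := by
        rw [Real.dist_eq, abs_of_nonneg (by linarith)]; linarith
      have := hcb ht.1 hdist
      rw [Real.dist_eq] at this
      have := abs_lt.mp this
      linarith [ht.2]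
    have : t₀ + δ ≤ t₀ := le_csInf hBne hnewlb
    linarith
  -- Conclusion
  intro s hs
  have hposIcc : ∀ t ∈ Set.Icc (0:ℝ) s, 0 ≤ F t := fun t ht => hnonneg t ht.1
  obtain ⟨hmono, hkey⟩ := key s (le_of_lt hs) hposIcc
  have hFs : s ≤ F s := (hkey s ⟨le_of_lt hs, le_refl _⟩).2
  refine ⟨lt_of_lt_of_le hs hFs, ?_⟩
  -- show F s ≤ s * F' s  using monotonicity of F'
  have hh : MonotoneOn (fun t => t * F' s - F t) (Set.Icc 0 s) := by
    apply monotoneOn_of_deriv_nonneg (convex_Icc (0:ℝ) s) ((continuousOn_id.mul continuousOn_const).sub (hFcont.mono (fun t ht => ht.1)))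
    · intro x hx
      rw [interior_Icc] at hx
      exact (((differentiable_id.differentiableAt.mul_const (F' s))).sub
        ((hF' x (Set.mem_Ici.mpr (le_of_lt hx.1))).hasDerivAt (Ici_mem_nhds hx.1)).differentiableAt).differentiableWithinAt
    · intro x hx
      rw [interior_Icc] at hx
      have hd : deriv (fun t => t * F' s - F t) x = F' s - F' x := by
        have h1 : HasDerivAt (fun t : ℝ => t * F' s) (F' s) x := by
          simpa using (hasDerivAt_id x).mul_const (F' s)
        have := h1.sub ((hF' x (Set.mem_Ici.mpr (le_of_lt hx.1))).hasDerivAt (Ici_mem_nhds hx.1))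
        exact this.deriv
      show 0 ≤ deriv (fun t => t * F' s - F t) x
      rw [hd]
      have := hmono ⟨le_of_lt hx.1, le_of_lt hx.2⟩ ⟨le_of_lt hs, le_refl _⟩ (le_of_lt hx.2)
      linarith
  have := hh ⟨le_refl 0, le_of_lt hs⟩ ⟨le_of_lt hs, le_refl _⟩ (le_of_lt hs)
  simp only [hF0, zero_mul, sub_zero] at this
  linarith
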